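/- (Theorem 1, in its Ḣ^{−1}/diaphony form, which bounds the 2-Wasserstein distance of the empirical measure to Lebesgue measure via Peyré's inequality) Let f : 𝕋 → ℝ be continuous, even, with mean value zero, with Fourier coefficients satisfying f̂(k) ≥ c·|k|^{−2} for all k ≠ 0 (for some fixed c > 0) and ∑_{k∈ℤ} f̂(k) < ∞, and let (x_n)_{n≥1} be a greedy sequence for f with initial points x_1, …, x_M. Then there is a constant C > 0, depending only on c, f(0) and the initial points, such that for all n ≥ M, ∑_{k∈ℤ, k≠0} |k|^{−2} · |(1/n)·∑_{m=1}^{n} e^{2πik x_m}|² ≤ C/n. -/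

import Mathlib

open MeasureTheory Filter

lemma my_fourier_sub {T : ℝ} (k : ℤ) (a b : AddCircle T) :
    fourier k (a - b) = fourier k a * (starRingEnd ℂ) (fourier k b) := by
  have : fourier k (a - b) = fourier k a * fourier k (-b) := by
    simp_rw [fourier_apply, sub_eq_add_neg, zsmul_add, AddCircle.toCircle_add, Circle.coe_mul]
  rw [this]
  congr 1
  rw [← fourier_neg (n := k) (x := b), fourier_apply, fourier_apply, neg_zsmul, zsmul_neg]

lemma my_pointwise (f : UnitAddCircle → ℝ) (hf_cont : Continuous f)
    (hf_sum : Summable fun k : ℤ => ‖fourierCoeff (fun t => (f t : ℂ)) k‖) (t : UnitAddCircle) :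
    HasSum (fun k : ℤ => fourierCoeff (fun t => (f t : ℂ)) k * fourier k t) ((f t : ℂ)) := by
  haveI : Fact ((0:ℝ) < 1) := ⟨zero_lt_one⟩
  set gc : C(UnitAddCircle, ℂ) := ⟨fun t => (f t : ℂ), Complex.continuous_ofReal.comp hf_cont⟩
  have hsum : Summable (fourierCoeff (⇑gc)) := Summable.of_norm hf_sum
  have := has_pointwise_sum_fourier_series_of_summable hsum t
  exact this

lemma my_energy_hasSum (f : UnitAddCircle → ℝ) (hf_cont : Continuous f)
    (hf_sum : Summable fun k : ℤ => ‖fourierCoeff (fun t => (f t : ℂ)) k‖)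
    (s : Finset ℕ) (x : ℕ → UnitAddCircle) :
    HasSum (fun k : ℤ => (fourierCoeff (fun t => (f t : ℂ)) k).re *
        ‖∑ m ∈ s, (fourier k (x m) : ℂ)‖ ^ 2)
      (∑ j ∈ s, ∑ m ∈ s, f (x j - x m)) := by
  set F := fourierCoeff (fun t => (f t : ℂ)) with hF
  have H1 : HasSum (fun k : ℤ => ∑ j ∈ s, ∑ m ∈ s, F k * fourier k (x j - x m))
      (∑ j ∈ s, ∑ m ∈ s, ((f (x j - x m)) : ℂ)) :=
    hasSum_sum fun j _ => hasSum_sum fun m _ => my_pointwise f hf_cont hf_sum _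
  have H2 : HasSum (fun k : ℤ => F k * ((‖∑ m ∈ s, (fourier k (x m) : ℂ)‖ ^ 2 : ℝ) : ℂ))
      (((∑ j ∈ s, ∑ m ∈ s, f (x j - x m) : ℝ)) : ℂ) := by
    convert H1 using 2 with k
    · have hS : ((‖∑ m ∈ s, (fourier k (x m) : ℂ)‖ ^ 2 : ℝ) : ℂ)
          = (∑ m ∈ s, (fourier k (x m) : ℂ)) *
            (starRingEnd ℂ) (∑ m ∈ s, (fourier k (x m) : ℂ)) := by
        rw [RCLike.mul_conj]; norm_cast
      simp_rw [my_fourier_sub]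
      rw [hS, map_sum, Finset.sum_mul_sum]
      simp_rw [Finset.mul_sum]
    · push_cast
      rfl
  have H3 := Complex.reCLM.hasSum H2
  simpa only [Complex.reCLM_apply, Complex.mul_re, Complex.ofReal_re, Complex.ofReal_im,
    mul_zero, sub_zero] using H3

lemma my_coeff_zero (f : UnitAddCircle → ℝ)
    (hf_mean : (∫ t : UnitAddCircle, f t) = 0) :
    fourierCoeff (fun t => (f t : ℂ)) 0 = 0 := by
  haveI : Fact ((0:ℝ) < 1) := ⟨zero_lt_one⟩
  have hmeas : (AddCircle.haarAddCircle : Measure UnitAddCircle) = volume := by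
    rw [AddCircle.volume_eq_smul_haarAddCircle]
    simp
  unfold fourierCoeff
  simp only [neg_zero, fourier_zero, one_smul, hmeas]
  have h := integral_ofReal (𝕜 := ℂ) (f := f) (μ := (volume : Measure UnitAddCircle))
  exact h.trans (by rw [hf_mean]; simp)

lemma my_exists_nonpos (f : UnitAddCircle → ℝ) (hf_cont : Continuous f)
    (hf_mean : (∫ t : UnitAddCircle, f t) = 0)
    (s : Finset ℕ) (x : ℕ → UnitAddCircle) :
    ∃ y : UnitAddCircle, ∑ m ∈ s, f (y - x m) ≤ 0 := by
  by_contra hpos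
  push_neg at hpos
  set F : UnitAddCircle → ℝ := fun y => ∑ m ∈ s, f (y - x m) with hFdef
  have hcont : ∀ m : ℕ, Continuous fun y : UnitAddCircle => f (y - x m) := fun m =>
    hf_cont.comp (continuous_sub_right (x m))
  have hInt : ∀ m : ℕ, Integrable (fun y : UnitAddCircle => f (y - x m)) volume := fun m =>
    (hcont m).integrable_of_hasCompactSupport (isClosed_tsupport _).isCompact
  have hFc : Continuous F := continuous_finset_sum _ fun m _ => hcont m
  have hFint : Integrable F volume :=
    hFc.integrable_of_hasCompactSupport (isClosed_tsupport _).isCompact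
  have hint : ∫ y : UnitAddCircle, F y = 0 := by
    have h1 : ∫ y : UnitAddCircle, F y
        = ∑ m ∈ s, ∫ y : UnitAddCircle, f (y - x m) :=
      integral_finset_sum s (fun m _ => hInt m)
    have h2 : ∀ m : ℕ, (∫ y : UnitAddCircle, f (y - x m)) = ∫ t : UnitAddCircle, f t := fun m =>
      integral_sub_right_eq_self f (x m)
    simp [h1, h2, hf_mean]
  obtain ⟨y₀, -, hy₀⟩ := isCompact_univ.exists_isMinOn ⟨(0 : UnitAddCircle), Set.mem_univ _⟩
    hFc.continuousOn
  have hconst : ∫ _y : UnitAddCircle, F y₀ = F y₀ := by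
    rw [integral_const]
    have : (volume (Set.univ : Set UnitAddCircle)).toReal = 1 := by
      rw [AddCircle.measure_univ]; simp
    rw [show volume.real (Set.univ : Set UnitAddCircle) = 1 from this, one_smul]
  have hle : ∫ _y : UnitAddCircle, F y₀ ≤ ∫ y, F y :=
    integral_mono (integrable_const _) hFint (fun y => hy₀ (Set.mem_univ y))
  rw [hconst, hint] at hle
  exact absurd hle (not_le.mpr (hpos y₀))

/-- Theorem 1, Ḣ^{−1}/diaphony form: For continuous even mean-zero
`f : 𝕋 → ℝ` with summable Fourier coefficients satisfying `f̂(k) ≥ c·|k|^{−2}` for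
`k ≠ 0`, and a greedy sequence `(x_n)` for `f`, there is `C > 0` such that for all
`n ≥ M`, `∑_{k≠0} |k|^{−2} · |(1/n)·∑_{m=1}^{n} e^{2πik x_m}|² ≤ C/n`. -/
theorem diaphony_bound
    (f : UnitAddCircle → ℝ) (hf_cont : Continuous f)
    (hf_even : ∀ t : UnitAddCircle, f (-t) = f t)
    (hf_mean : (∫ t : UnitAddCircle, f t) = 0)
    (hf_sum : Summable fun k : ℤ => ‖fourierCoeff (fun t => (f t : ℂ)) k‖)
    (c : ℝ) (hc : 0 < c)
    (hf_lb : ∀ k : ℤ, k ≠ 0 → c / (k : ℝ) ^ 2 ≤ (fourierCoeff (fun t => (f t : ℂ)) k).re)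
    (M : ℕ) (hM : 1 ≤ M) (x : ℕ → UnitAddCircle)
    (hgreedy : ∀ n : ℕ, M < n → ∀ y : UnitAddCircle,
      ∑ k ∈ Finset.Icc 1 (n - 1), f (x n - x k) ≤ ∑ k ∈ Finset.Icc 1 (n - 1), f (y - x k)) :
    ∃ C > 0, ∀ n : ℕ, M ≤ n →
      (∑' k : {k : ℤ // k ≠ 0}, (1 : ℝ) / ((k : ℤ) : ℝ) ^ 2 *
          ‖(1 / (n : ℂ)) * ∑ m ∈ Finset.Icc 1 n, fourier (k : ℤ) (x m)‖ ^ 2)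
        ≤ C / n := by
  classical
  set F := fourierCoeff (fun t => (f t : ℂ)) with hFdef
  set E : ℕ → ℝ := fun n => ∑ j ∈ Finset.Icc 1 n, ∑ m ∈ Finset.Icc 1 n, f (x j - x m) with hEdef
  -- one-step energy increment
  have hstep : ∀ n : ℕ, M ≤ n → E (n + 1) ≤ E n + f 0 := by
    intro n hn
    obtain ⟨y, hy⟩ := my_exists_nonpos f hf_cont hf_mean (Finset.Icc 1 n) x
    have hgr := hgreedy (n + 1) (Nat.lt_succ_of_le hn) y
    simp only [Nat.add_sub_cancel] at hgr
    have hnotmem : (n + 1) ∉ Finset.Icc 1 n := by simp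
    have hins : Finset.Icc 1 (n + 1) = insert (n + 1) (Finset.Icc 1 n) := by
      exact (Finset.insert_Icc_right_eq_Icc_add_one (by omega)).symm
    have heven : ∀ j : ℕ, f (x j - x (n+1)) = f (x (n+1) - x j) := fun j => by
      rw [← hf_even (x (n+1) - x j), neg_sub]
    have hexpand : E (n+1) = E n + f 0 + 2 * ∑ m ∈ Finset.Icc 1 n, f (x (n+1) - x m) := by
      simp only [hEdef, hins, Finset.sum_insert hnotmem, Finset.sum_add_distrib, heven, sub_self]
      ring
    rw [hexpand]
    have h2 : ∑ m ∈ Finset.Icc 1 n, f (x (n+1) - x m) ≤ 0 := le_trans hgr hy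
    linarith
  -- linear energy bound
  have hE : ∀ n : ℕ, M ≤ n → E n ≤ E M + ((n : ℝ) - M) * |f 0| := by
    intro n hn
    induction n, hn using Nat.le_induction with
    | base => simp
    | succ n hn ih =>
      have h1 := hstep n hn
      have h2 : f 0 ≤ |f 0| := le_abs_self _
      push_cast
      push_cast at ih
      nlinarith
  refine ⟨(|E M| + |f 0| + 1) / c, by positivity, fun n hn => ?_⟩
  have hn1 : 1 ≤ n := le_trans hM hn
  have hnpos : (0:ℝ) < n := by exact_mod_cast Nat.lt_of_lt_of_le Nat.zero_lt_one hn1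
  set S : ℤ → ℂ := fun k => ∑ m ∈ Finset.Icc 1 n, fourier k (x m) with hSdef
  have Hsum := my_energy_hasSum f hf_cont hf_sum (Finset.Icc 1 n) x
  have Hsub : HasSum (fun k : {k : ℤ // k ≠ 0} => (F (k : ℤ)).re * ‖S (k : ℤ)‖ ^ 2) (E n) := by
    have hsupp : Function.support (fun k : ℤ => (F k).re * ‖S k‖ ^ 2) ⊆ {k : ℤ | k ≠ 0} := by
      intro k hk
      simp only [Function.mem_support] at hk
      rcases eq_or_ne k 0 with rfl | hne
      · exact absurd (by rw [hFdef, my_coeff_zero f hf_mean]; simp) hk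
      · exact hne
    exact (hasSum_subtype_iff_of_support_subset hsupp).mpr Hsum
  have hptle : ∀ k : {k : ℤ // k ≠ 0},
      (1:ℝ)/(((k:ℤ)):ℝ)^2 * ‖(1/(n:ℂ)) * S (k:ℤ)‖^2
        ≤ (1/(c*(n:ℝ)^2)) * ((F (k:ℤ)).re * ‖S (k:ℤ)‖^2) := by
    rintro ⟨k, hk⟩
    have hkR : ((k:ℝ)) ≠ 0 := Int.cast_ne_zero.mpr hk
    have hlb := hf_lb k hk
    rw [hFdef] at *
    have hnormS : ‖(1/(n:ℂ)) * S k‖^2 = ‖S k‖^2 / (n:ℝ)^2 := by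
      rw [norm_mul, mul_pow, norm_div, norm_one, Complex.norm_natCast]
      field_simp
    have h1 : c / (k:ℝ)^2 * ‖S k‖^2 ≤ (fourierCoeff (fun t => (f t : ℂ)) k).re * ‖S k‖^2 :=
      mul_le_mul_of_nonneg_right hlb (by positivity)
    calc (1:ℝ)/((k:ℝ))^2 * ‖(1/(n:ℂ)) * S k‖^2
        = (c/(k:ℝ)^2 * ‖S k‖^2)/(c*(n:ℝ)^2) := by
          rw [hnormS]; field_simp
      _ ≤ ((fourierCoeff (fun t => (f t : ℂ)) k).re * ‖S k‖^2)/(c*(n:ℝ)^2) := by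
          gcongr
      _ = (1/(c*(n:ℝ)^2)) * ((fourierCoeff (fun t => (f t : ℂ)) k).re * ‖S k‖^2) := by ring
  have hsumR : Summable (fun k : {k:ℤ//k≠0} =>
      (1/(c*(n:ℝ)^2)) * ((F (k:ℤ)).re * ‖S (k:ℤ)‖^2)) := Hsub.summable.mul_left _
  have htnn : ∀ k : {k:ℤ//k≠0},
      0 ≤ (1:ℝ)/(((k:ℤ)):ℝ)^2 * ‖(1/(n:ℂ)) * S (k:ℤ)‖^2 := fun k => by positivity
  have hts : Summable (fun k : {k:ℤ//k≠0} =>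
      (1:ℝ)/(((k:ℤ)):ℝ)^2 * ‖(1/(n:ℂ)) * S (k:ℤ)‖^2) :=
    Summable.of_nonneg_of_le htnn hptle hsumR
  have hmain := Summable.tsum_le_tsum hptle hts hsumR
  have hrhs : (∑' k : {k:ℤ//k≠0}, (1/(c*(n:ℝ)^2)) * ((F (k:ℤ)).re * ‖S (k:ℤ)‖^2))
      = (1/(c*(n:ℝ)^2)) * E n := (Hsub.mul_left _).tsum_eq
  have hEn := hE n hn
  have hMn : (M:ℝ) ≤ n := by exact_mod_cast hn
  have h0n : (1:ℝ) ≤ n := by exact_mod_cast hn1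
  have hEM : E M ≤ |E M| := le_abs_self _
  have hkey : E n ≤ (|E M| + |f 0| + 1) * n := by
    nlinarith [abs_nonneg (f 0), abs_nonneg (E M)]
  have hfinal : (1/(c*(n:ℝ)^2)) * E n ≤ ((|E M| + |f 0| + 1) / c) / n := by
    rw [div_div, one_div, inv_mul_eq_div, div_le_div_iff₀ (by positivity) (by positivity)]
    nlinarith [mul_le_mul_of_nonneg_right hkey (by positivity : (0:ℝ) ≤ c * n)]
  exact (hmain.trans_eq hrhs).trans hfinal
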